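/- Fix an integer m ≥ 2. Define M(x) = exp(−2π det x) · (det x)^{m−1} / (((b−c)+i(a+d))/(2i))^m for x = ((a,b),(c,d)) with det x > 0, and M(x) = 0 for det x ≤ 0. Then there is a constant C (depending on m) such that |M(x)| ≤ C (1 + ‖x‖)^{−m} for all x, where ‖x‖² = a²+b²+c²+d². -/

import Mathlib

set_option maxHeartbeats 1000000


/-- The Bergman archimedean test function of weight `m`:
`M(x) = exp(−2π det x) (det x)^{m−1} / (((b−c)+i(a+d))/(2i))^m` for `det x > 0`, else `0`. -/
noncomputable def bergman (m : ℕ) (x : Matrix (Fin 2) (Fin 2) ℝ) : ℂ :=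
  if 0 < x.det then
    (Real.exp (-(2 * Real.pi * x.det)) : ℂ) * (x.det : ℂ) ^ (m - 1) /
      ((((x 0 1 - x 1 0 : ℝ) : ℂ) + Complex.I * ((x 0 0 + x 1 1 : ℝ) : ℂ)) /
        (2 * Complex.I)) ^ m
  else 0

theorem stmt2 (m : ℕ) (hm : 2 ≤ m) :
    ∃ C > 0, ∀ x : Matrix (Fin 2) (Fin 2) ℝ,
      ‖bergman m x‖ ≤
        C / (1 + Real.sqrt ((x 0 0) ^ 2 + (x 0 1) ^ 2 + (x 1 0) ^ 2 + (x 1 1) ^ 2)) ^ m := by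
  refine ⟨((m-1).factorial + 1) * 4 ^ m, by positivity, fun x => ?_⟩
  set a := x 0 0 with ha
  set b := x 0 1 with hb
  set c := x 1 0 with hc
  set d := x 1 1 with hd
  set s : ℝ := a ^ 2 + b ^ 2 + c ^ 2 + d ^ 2 with hs
  set N : ℝ := Real.sqrt s with hN
  have hs0 : 0 ≤ s := by positivity
  have hN0 : 0 ≤ N := Real.sqrt_nonneg _
  have hN1 : 0 < 1 + N := by linarith
  have hCpos : (0:ℝ) < ((m-1).factorial + 1) * 4 ^ m := by positivity
  rw [bergman]
  split_ifs with hdet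
  · set D : ℝ := x.det with hD
    have hDval : D = a * d - b * c := by
      rw [hD, Matrix.det_fin_two]
    have hDs : 2 * D ≤ s := by nlinarith [sq_nonneg (a - d), sq_nonneg (b + c)]
    have habs : ‖(((b - c : ℝ) : ℂ) + Complex.I * ((a + d : ℝ) : ℂ)) / (2 * Complex.I)‖
        = Real.sqrt (s + 2 * D) / 2 := by
      have h1 : (b - c)^2 + (a + d)^2 = s + 2 * D := by rw [hDval, hs]; ring
      rw [norm_div, Complex.norm_def, Complex.normSq_apply]
      simp [Complex.norm_def, Complex.normSq_apply, ← h1]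
      ring_nf
    rw [norm_div, norm_mul, norm_pow, norm_pow, Complex.norm_real, Complex.norm_real, Real.norm_eq_abs, Real.norm_eq_abs, habs]
    rw [abs_of_pos (Real.exp_pos _), abs_of_pos hdet]
    set T : ℝ := Real.sqrt (s + 2 * D) / 2 with hT
    have hT0 : 0 < T := by
      have : 0 < s + 2 * D := by linarith
      positivity
    have hT2 : T ^ 2 = (s + 2 * D) / 4 := by
      rw [hT, div_pow, Real.sq_sqrt (by linarith)]
      ring
    rw [div_le_div_iff₀ (by positivity) (by positivity)]
    -- goal: exp(-(2πD)) * D^(m-1) * (1+N)^m ≤ C * T^m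
    have hexp1 : Real.exp (-(2 * Real.pi * D)) ≤ 1 := by
      rw [Real.exp_le_one_iff]
      nlinarith [Real.pi_pos]
    rcases le_or_gt s 1 with hcase | hcase
    · -- small case
      have hNle : N ≤ 1 := by
        rw [hN, show (1:ℝ) = Real.sqrt 1 by simp]
        exact Real.sqrt_le_sqrt hcase
      have hD1 : D ≤ 1/2 := by linarith
      have key : D ^ (m-1) * 2 ^ m ≤ 4 ^ m * T ^ m := by
        have hsq : (D ^ (m-1) * 2 ^ m) ^ 2 ≤ (4 ^ m * T ^ m) ^ 2 := by
          have h2m4 : ((2:ℝ)^m)^2 = 4^m := by rw [← pow_mul, pow_mul']; norm_num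
          have h4m16 : ((4:ℝ)^m)^2 = 16^m := by rw [← pow_mul, pow_mul']; norm_num
          have hTm : ((T:ℝ)^m)^2 = (T^2)^m := by rw [← pow_mul, pow_mul']
          have h1 : (D ^ (m-1) * 2 ^ m) ^ 2 = D ^ (2*m-2) * 4 ^ m := by
            rw [mul_pow, ← pow_mul, h2m4, show (m-1) * 2 = 2*m-2 from by omega]
          have h2 : (4 ^ m * T ^ m) ^ 2 = 16 ^ m * (T^2) ^ m := by
            rw [mul_pow, h4m16, hTm]
          rw [h1, h2]
          have hT2ge : (D / 2) ^ m ≤ (T ^ 2) ^ m := by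
            apply pow_le_pow_left₀ (by positivity)
            rw [hT2]; linarith
          calc D ^ (2*m-2) * 4 ^ m = D ^ m * D ^ (m-2) * 4 ^ m := by
                rw [← pow_add]; congr 2; omega
            _ ≤ D ^ m * 1 * 4 ^ m := by
                have : D ^ (m-2) ≤ 1 := pow_le_one₀ (le_of_lt hdet) (by linarith)
                apply mul_le_mul_of_nonneg_right _ (by positivity)
                exact mul_le_mul_of_nonneg_left this (by positivity)
            _ = (D / 2) ^ m * 8 ^ m := by
                have h8 : (8:ℝ)^m = 4^m * 2^m := by rw [← mul_pow]; norm_num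
                rw [div_pow]
                field_simp [h8]
                rw [h8]
            _ ≤ (T ^ 2) ^ m * 8 ^ m := mul_le_mul_of_nonneg_right hT2ge (by positivity)
            _ ≤ (T ^ 2) ^ m * (8 ^ m * 2 ^ m) := by
                have h2m : (1:ℝ) ≤ 2 ^ m := by
                  calc (1:ℝ) = 1 ^ m := (one_pow m).symm
                    _ ≤ 2 ^ m := pow_le_pow_left₀ one_pos.le (by norm_num) m
                apply mul_le_mul_of_nonneg_left _ (by positivity)
                nlinarith [pow_pos (show (0:ℝ) < 8 by norm_num) m]
            _ = 16 ^ m * (T^2) ^ m := by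
                have h16 : (16:ℝ)^m = 8^m * 2^m := by rw [← mul_pow]; norm_num
                rw [h16]; ring
        exact le_of_pow_le_pow_left₀ (by norm_num) (by positivity) hsq
      calc Real.exp (-(2 * Real.pi * D)) * D ^ (m-1) * (1+N) ^ m
          ≤ 1 * D ^ (m-1) * 2 ^ m := by
            apply mul_le_mul (mul_le_mul_of_nonneg_right hexp1 (by positivity))
              (pow_le_pow_left₀ (by linarith) (by linarith) m) (by positivity) (by positivity)
        _ = D ^ (m-1) * 2 ^ m := by ring
        _ ≤ 4 ^ m * T ^ m := key
        _ ≤ (((m-1).factorial + 1) * 4 ^ m) * T ^ m := by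
            apply mul_le_mul_of_nonneg_right _ (pow_nonneg hT0.le m)
            apply le_mul_of_one_le_left (by positivity)
            have : (0:ℝ) ≤ (m-1).factorial := Nat.cast_nonneg _
            linarith
    · -- large case
      have hNge : 1 ≤ N := by
        rw [hN, show (1:ℝ) = Real.sqrt 1 by simp]
        exact Real.sqrt_le_sqrt (le_of_lt hcase)
      have hexpD : Real.exp (-(2 * Real.pi * D)) * D ^ (m-1) ≤ (m-1).factorial := by
        have h1 : D ^ (m-1) / (m-1).factorial ≤ Real.exp D :=
          Real.pow_div_factorial_le_exp D (le_of_lt hdet) (m-1)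
        have h2 : Real.exp D ≤ Real.exp (2 * Real.pi * D) := by
          apply Real.exp_le_exp.2
          nlinarith [Real.pi_gt_three]
        have h3 : D ^ (m-1) ≤ (m-1).factorial * Real.exp (2 * Real.pi * D) := by
          have hf : (0:ℝ) < (m-1).factorial := by positivity
          rw [div_le_iff₀ hf] at h1
          calc D ^ (m-1) ≤ Real.exp D * (m-1).factorial := h1
            _ ≤ Real.exp (2 * Real.pi * D) * (m-1).factorial :=
                mul_le_mul_of_nonneg_right h2 (le_of_lt hf)
            _ = (m-1).factorial * Real.exp (2 * Real.pi * D) := by ring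
        rw [Real.exp_neg]
        rw [inv_mul_le_iff₀ (Real.exp_pos _)]
        linarith [h3]
      have hTN : N / 2 ≤ T := by
        rw [hT]
        apply div_le_div_of_nonneg_right _ (by norm_num)
        · exact Real.sqrt_le_sqrt (by linarith)
      calc Real.exp (-(2 * Real.pi * D)) * D ^ (m-1) * (1+N) ^ m
          ≤ (m-1).factorial * (2*N) ^ m := by
            apply mul_le_mul hexpD (pow_le_pow_left₀ (by linarith) (by linarith) m)
              (by positivity) (by positivity)
        _ = ((m-1).factorial * 4 ^ m) * (N/2) ^ m := by
            have h4 : (4:ℝ)^m = 2^m * 2^m := by rw [← mul_pow]; norm_num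
            rw [mul_pow, div_pow, h4]
            field_simp
        _ ≤ ((m-1).factorial * 4 ^ m) * T ^ m := by
            apply mul_le_mul_of_nonneg_left (pow_le_pow_left₀ (by positivity) hTN m)
              (by positivity)
        _ ≤ (((m-1).factorial + 1) * 4 ^ m) * T ^ m := by
            apply mul_le_mul_of_nonneg_right _ (by positivity)
            nlinarith [pow_pos (show (0:ℝ) < 4 by norm_num) m]
  · simp only [norm_zero]
    exact div_nonneg hCpos.le (pow_nonneg hN1.le m)
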